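/- Let f_λ(x) = G(λ, x) be a one-parameter family of maps, smooth (at least C³) in both variables. Suppose that (1) f_λ(x₀) = x₀ for all λ in an open interval around λ₀; (2) ∂f_{λ₀}/∂x(x₀) = −1; and (3) ∂/∂λ [ ∂(f_λ ∘ f_λ)/∂x (x₀) ] evaluated at λ = λ₀ is nonzero. Then there exist an open interval I around x₀ and a C¹ function p : I → ℝ with p(x₀) = λ₀ such that f_{p(x)}(f_{p(x)}(x)) = x for every x ∈ I, while f_{p(x)}(x) ≠ x for every x ∈ I with x ≠ x₀; that is, each such x ≠ x₀ is a genuine period-2 point of f_{p(x)}. -/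

import Mathlib

open intervalIntegral MeasureTheory Set Filter Metric


lemma aux_key_linear (L : ℝ×ℝ →L[ℝ] ℝ) (w : ℝ×ℝ) : L w = w.1 * L (1,0) + w.2 * L (0,1) := by
  have hw : w = w.1 • ((1:ℝ),(0:ℝ)) + w.2 • ((0:ℝ),(1:ℝ)) := by
    simp [Prod.ext_iff]
  conv_lhs => rw [hw]
  rw [map_add, _root_.map_smul, _root_.map_smul]
  simp [smul_eq_mul]

lemma aux_contDiff_paramDeriv {g : ℝ×ℝ → ℝ} (hg : ContDiff ℝ 3 g) :
    ContDiff ℝ 2 (fun q : ℝ×ℝ => deriv (fun y => g (q.1, y)) q.2) := by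
  have h := ContDiff.fderiv_apply (f := fun (q : ℝ×ℝ) (y : ℝ) => g (q.1, y))
    (g := fun q : ℝ×ℝ => q.2) (k := fun _ => (1:ℝ)) (m := 3) (n := 2)
    (hg.comp (by fun_prop)) (by fun_prop) (by fun_prop) (by norm_num)
  simpa only [fderiv_apply_one_eq_deriv] using h


noncomputable def pdEquiv (a b : ℝ) (ha : a ≠ 0) : (ℝ×ℝ) ≃L[ℝ] (ℝ×ℝ) :=
  LinearEquiv.toContinuousLinearEquiv
  { toFun := fun w => (a*w.1 + b*w.2, w.2)
    invFun := fun v => ((v.1 - b*v.2)/a, v.2)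
    map_add' := by intro x y; simp [Prod.ext_iff]; ring
    map_smul' := by intro c x; simp [Prod.ext_iff]; ring
    left_inv := by intro w; field_simp; simp [ha]
    right_inv := by intro v; field_simp; simp }

lemma pdEquiv_apply (a b : ℝ) (ha : a ≠ 0) (w : ℝ×ℝ) :
    pdEquiv a b ha w = (a*w.1 + b*w.2, w.2) := rfl


lemma aux_contDiff_paramIntegral {k : (ℝ×ℝ) × ℝ → ℝ} (hk : ContDiff ℝ 2 k) :
    ContDiff ℝ 1 (fun z : ℝ×ℝ => ∫ t in (0:ℝ)..1, k (z, t)) := by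
  -- partial derivative in z
  set k' : (ℝ×ℝ) → ℝ → (ℝ×ℝ →L[ℝ] ℝ) := fun z t => fderiv ℝ (fun w => k (w, t)) z with hk'def
  have hkz : ∀ t : ℝ, ContDiff ℝ 2 (fun w : ℝ×ℝ => k (w, t)) := by
    intro t; exact hk.comp (by fun_prop)
  have hk'cont : Continuous (fun p : (ℝ×ℝ) × ℝ => k' p.1 p.2) := by
    have h := ContDiff.fderiv (𝕜 := ℝ) (f := fun (p : (ℝ×ℝ) × ℝ) (w : ℝ×ℝ) => k (w, p.2))
      (g := fun p : (ℝ×ℝ) × ℝ => p.1) (m := 2) (n := 1)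
      (hk.comp (by fun_prop)) (by fun_prop) (by norm_num)
    exact h.continuous
  -- derivative of the integral at each point
  have key : ∀ z₀ : ℝ×ℝ, HasFDerivAt (fun z : ℝ×ℝ => ∫ t in (0:ℝ)..1, k (z, t))
      (∫ t in (0:ℝ)..1, k' z₀ t) z₀ := by
    intro z₀
    -- bound on the compact set closedBall z₀ 1 × Icc 0 1
    obtain ⟨M, hM⟩ : ∃ M, ∀ p ∈ (closedBall z₀ 1) ×ˢ (Icc (0:ℝ) 1), ‖k' p.1 p.2‖ ≤ M := by
      obtain ⟨M, hM⟩ := ((isCompact_closedBall z₀ 1).prod isCompact_Icc).bddAbove_image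
        (hk'cont.norm.continuousOn)
      exact ⟨M, fun p hp => hM (Set.mem_image_of_mem _ hp)⟩
    apply intervalIntegral.hasFDerivAt_integral_of_dominated_of_fderiv_le
      (s := ball z₀ 1) (bound := fun _ => M) (ball_mem_nhds z₀ one_pos)
    · filter_upwards with z
      exact (Continuous.aestronglyMeasurable (hk.continuous.comp (by fun_prop)))
    · exact (Continuous.intervalIntegrable (hk.continuous.comp (by fun_prop)) _ _)
    · exact (Continuous.aestronglyMeasurable (by fun_prop))
    · filter_upwards with t ht x hx
      have ht' : t ∈ Icc (0:ℝ) 1 := by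
        rw [Set.uIoc_of_le (by norm_num : (0:ℝ) ≤ 1)] at ht
        exact ⟨le_of_lt ht.1, ht.2⟩
      exact hM (x, t) ⟨ball_subset_closedBall hx, ht'⟩
    · exact intervalIntegrable_const
    · filter_upwards with t ht x hx
      exact ((hkz t).differentiable (by norm_num) x).hasFDerivAt
  -- C¹
  rw [contDiff_one_iff_fderiv]
  constructor
  · exact fun z => (key z).differentiableAt
  · have : (fderiv ℝ fun z : ℝ×ℝ => ∫ t in (0:ℝ)..1, k (z, t))
        = fun z₀ => ∫ t in (0:ℝ)..1, k' z₀ t := funext fun z₀ => (key z₀).fderiv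
    rw [this]
    exact intervalIntegral.continuous_parametric_intervalIntegral_of_continuous'
      (f := fun z t => k' z t) (μ := volume) hk'cont 0 1

lemma aux_ftc {g : ℝ×ℝ → ℝ} (hg : ContDiff ℝ 3 g) (x₀ lam x : ℝ) :
    (∫ t in (0:ℝ)..1, deriv (fun y => g (lam, y)) (x₀ + t*(x-x₀))) * (x - x₀)
      = g (lam, x) - g (lam, x₀) := by
  set D : ℝ → ℝ := fun y => deriv (fun y => g (lam, y)) y with hD
  have hgy : ContDiff ℝ 3 (fun y => g (lam, y)) := hg.comp (by fun_prop)
  have hDc : Continuous D := by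
    have := (aux_contDiff_paramDeriv hg).continuous.comp
      (continuous_const.prodMk continuous_id : Continuous fun y : ℝ => (lam, y))
    exact this
  have hdiff : ∀ y : ℝ, HasDerivAt (fun y => g (lam, y)) (D y) y :=
    fun y => (hgy.differentiable (by norm_num) y).hasDerivAt
  have hsub : ∫ t in (0:ℝ)..1, (x - x₀) • D (x₀ + t*(x-x₀))
      = ∫ u in (x₀ + 0*(x-x₀))..(x₀ + 1*(x-x₀)), D u := by
    apply intervalIntegral.integral_comp_smul_deriv (f := fun t => x₀ + t*(x-x₀))
      (f' := fun _ => x - x₀) (g := D)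
    · intro t _
      have h := ((hasDerivAt_id t).const_mul (x-x₀)).const_add x₀
      simpa [mul_comm] using h
    · exact continuousOn_const
    · exact hDc
  have hftc : ∫ u in x₀..x, D u = g (lam, x) - g (lam, x₀) := by
    apply intervalIntegral.integral_deriv_eq_sub (f := fun y => g (lam, y))
    · intro y _; exact (hdiff y).differentiableAt
    · exact hDc.intervalIntegrable _ _
  rw [intervalIntegral.integral_smul] at hsub
  simp only [zero_mul, add_zero, one_mul] at hsub
  have : x₀ + (x - x₀) = x := by ring
  rw [this] at hsub
  rw [mul_comm, ← smul_eq_mul, hsub, hftc]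

/-- the period-doubling bifurcation theorem. -/
theorem stmt_1 (G : ℝ × ℝ → ℝ) (hG : ContDiff ℝ 3 G) (lam₀ x₀ : ℝ)
    (h1 : ∃ ε > (0:ℝ), ∀ lam : ℝ, |lam - lam₀| < ε → G (lam, x₀) = x₀)
    (h2 : deriv (fun x => G (lam₀, x)) x₀ = -1)
    (h3 : deriv (fun lam => deriv (fun x => G (lam, G (lam, x))) x₀) lam₀ ≠ 0) :
    ∃ (a b : ℝ), a < x₀ ∧ x₀ < b ∧
      ∃ p : ℝ → ℝ, ContDiffOn ℝ 1 p (Set.Ioo a b) ∧ p x₀ = lam₀ ∧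
        ∀ x ∈ Set.Ioo a b, G (p x, G (p x, x)) = x ∧ (x ≠ x₀ → G (p x, x) ≠ x) := by
  obtain ⟨ε, hε, h1⟩ := h1
  -- the second iterate and its partial derivative in the space variable
  set g : ℝ×ℝ → ℝ := fun z => G (z.1, G z) with hgdef
  have hg : ContDiff ℝ 3 g := hG.comp (contDiff_fst.prodMk hG)
  set D : ℝ×ℝ → ℝ := fun q => deriv (fun y => g (q.1, y)) q.2 with hDdef
  have hD : ContDiff ℝ 2 D := aux_contDiff_paramDeriv hg
  -- the Hadamard-quotient function
  set F : ℝ×ℝ → ℝ := fun z => (∫ t in (0:ℝ)..1, D (z.1, x₀ + t*(z.2 - x₀))) - 1 with hFdef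
  have hF : ContDiff ℝ 1 F := by
    have hk : ContDiff ℝ 2 (fun p : (ℝ×ℝ)×ℝ => D (p.1.1, x₀ + p.2*(p.1.2 - x₀))) :=
      hD.comp (by fun_prop)
    exact (aux_contDiff_paramIntegral hk).sub contDiff_const
  have hFmul : ∀ lam x : ℝ, F (lam, x) * (x - x₀) = g (lam, x) - g (lam, x₀) - (x - x₀) := by
    intro lam x
    have h := aux_ftc hg x₀ lam x
    have hint : (∫ t in (0:ℝ)..1, D (lam, x₀ + t*(x - x₀)))
        = ∫ t in (0:ℝ)..1, deriv (fun y => g (lam, y)) (x₀ + t*(x-x₀)) := rfl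
    simp only [hFdef, hint]
    rw [sub_mul, h, one_mul]
  have hFpt : ∀ lam : ℝ, F (lam, x₀) = D (lam, x₀) - 1 := by
    intro lam
    simp only [hFdef, sub_self, mul_zero, add_zero, intervalIntegral.integral_const, smul_eq_mul,
      sub_zero, one_mul]
  -- value of D at the base point via the chain rule
  have hGx₀ : G (lam₀, x₀) = x₀ := h1 lam₀ (by simpa using hε)
  have hu' : HasDerivAt (fun y => G (lam₀, y)) (-1) x₀ := by
    rw [← h2]
    exact ((hG.comp ((contDiff_const (c := lam₀)).prodMk contDiff_id)).differentiable
      (by norm_num) x₀).hasDerivAt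
  have hDlam₀ : D (lam₀, x₀) = 1 := by
    have hu₂ : HasDerivAt (fun y => G (lam₀, y)) (-1) (G (lam₀, x₀)) := by
      rw [hGx₀]; exact hu'
    have hcomp : HasDerivAt (fun y => G (lam₀, G (lam₀, y))) ((-1) * (-1)) x₀ :=
      by have := HasDerivAt.comp x₀ hu₂ hu'; exact this
    have : deriv (fun y => G (lam₀, G (lam₀, y))) x₀ = 1 := by
      rw [hcomp.deriv]; norm_num
    exact this
  have hF0 : F (lam₀, x₀) = 0 := by rw [hFpt, hDlam₀]; ring
  -- the transversality condition restated
  have h3' : deriv (fun lam => D (lam, x₀)) lam₀ ≠ 0 := h3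
  -- derivative data for the inverse function theorem
  have hLF : HasFDerivAt F (fderiv ℝ F (lam₀, x₀)) (lam₀, x₀) :=
    (hF.differentiable (by norm_num) (lam₀, x₀)).hasFDerivAt
  set L : ℝ×ℝ →L[ℝ] ℝ := fderiv ℝ F (lam₀, x₀) with hLdef
  have hlam : HasDerivAt (fun lam => F (lam, x₀)) (L (1, 0)) lam₀ := by
    have hcurve : HasDerivAt (fun lam : ℝ => (lam, x₀)) ((1:ℝ), (0:ℝ)) lam₀ :=
      (hasDerivAt_id lam₀).prodMk (hasDerivAt_const lam₀ x₀)
    exact hLF.comp_hasDerivAt lam₀ hcurve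
  have ha : L (1, 0) ≠ 0 := by
    have heq : (fun lam => F (lam, x₀)) = fun lam => D (lam, x₀) - 1 := funext hFpt
    have hd : deriv (fun lam => D (lam, x₀)) lam₀ = L (1, 0) := by
      rw [← deriv_sub_const (c := (1:ℝ)), ← heq]
      exact hlam.deriv
    rwa [hd] at h3'
  -- the map Φ and the inverse function theorem
  set E := pdEquiv (L (1,0)) (L (0,1)) ha with hEdef
  set Φ : ℝ×ℝ → ℝ×ℝ := fun z => (F z, z.2) with hΦdef
  have hEΦ : HasFDerivAt Φ (E : ℝ×ℝ →L[ℝ] ℝ×ℝ) (lam₀, x₀) := by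
    have hΦ' : HasFDerivAt Φ (L.prod (ContinuousLinearMap.snd ℝ ℝ ℝ)) (lam₀, x₀) :=
      hLF.prodMk hasFDerivAt_snd
    convert hΦ' using 1
    refine ContinuousLinearMap.ext fun w => Prod.ext ?_ ?_
    · show (pdEquiv (L (1,0)) (L (0,1)) ha w).1 = L w
      rw [pdEquiv_apply, aux_key_linear L w]; dsimp; ring
    · rfl
  have hΦc : ContDiffAt ℝ 1 Φ (lam₀, x₀) := (hF.prodMk contDiff_snd).contDiffAt
  set ψ : ℝ×ℝ → ℝ×ℝ := hΦc.localInverse hEΦ one_ne_zero with hψdef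
  have hΦpt : Φ (lam₀, x₀) = ((0:ℝ), x₀) := by
    simp only [hΦdef, hF0]
  have hψpt : ψ ((0:ℝ), x₀) = (lam₀, x₀) := by
    rw [← hΦpt]; exact hΦc.localInverse_apply_image hEΦ one_ne_zero
  have hψc : ContDiffAt ℝ 1 ψ ((0:ℝ), x₀) := by
    rw [← hΦpt]; exact hΦc.to_localInverse hEΦ one_ne_zero
  have hrinv : ∀ᶠ y in nhds ((0:ℝ), x₀), Φ (ψ y) = y := by
    have h := (hΦc.hasStrictFDerivAt' hEΦ one_ne_zero).eventually_right_inverse (f := Φ)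
    rw [hΦpt] at h
    exact h
  -- the parameter function p
  set p : ℝ → ℝ := fun x => (ψ ((0:ℝ), x)).1 with hpdef
  have hpc : ContDiffAt ℝ 1 p x₀ := by
    have hin : ContDiffAt ℝ 1 (fun x : ℝ => ((0:ℝ), x)) x₀ :=
      (contDiffAt_const.prodMk contDiffAt_id)
    exact contDiffAt_fst.comp x₀ (hψc.comp x₀ hin)
  have hp0 : p x₀ = lam₀ := by
    simp only [hpdef, hψpt]
  have hevF : ∀ᶠ x in nhds x₀, F (p x, x) = 0 := by
    have hc : ContinuousAt (fun x : ℝ => ((0:ℝ), x)) x₀ := by fun_prop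
    have h := hc.tendsto.eventually hrinv
    filter_upwards [h] with x hx
    have h2x : (ψ ((0:ℝ), x)).2 = x := congrArg Prod.snd hx
    have hfst : F (ψ ((0:ℝ), x)) = 0 := congrArg Prod.fst hx
    have hψx : ψ ((0:ℝ), x) = (p x, x) := Prod.ext rfl h2x
    rwa [hψx] at hfst
  -- the region with negative space-derivative of G
  set D1 : ℝ×ℝ → ℝ := fun q => deriv (fun y => G (q.1, y)) q.2 with hD1def
  have hD1 : ContDiff ℝ 2 D1 := aux_contDiff_paramDeriv hG
  have hD1pt : D1 (lam₀, x₀) = -1 := h2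
  have hD1neg : ∀ᶠ q in nhds (lam₀, x₀), D1 q < 0 := by
    apply hD1.continuous.continuousAt.eventually_lt continuousAt_const
    rw [hD1pt]; norm_num
  obtain ⟨δ, hδpos, hδ⟩ : ∃ δ > 0, ∀ q : ℝ×ℝ, dist q (lam₀, x₀) < δ → D1 q < 0 := by
    rcases Metric.eventually_nhds_iff.mp hD1neg with ⟨δ, hδ, h⟩
    exact ⟨δ, hδ, fun q hq => h hq⟩
  -- no nearby fixed points other than x₀
  have hnofix : ∀ lam x' : ℝ, |lam - lam₀| < min ε δ → |x' - x₀| < δ → x' ≠ x₀ →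
      G (lam, x') ≠ x' := by
    intro lam x' hlam hx' hne
    have hball : ∀ y : ℝ, |y - x₀| < δ → D1 (lam, y) < 0 := by
      intro y hy
      apply hδ
      rw [Prod.dist_eq]
      exact max_lt (by rw [Real.dist_eq]; exact lt_of_lt_of_le hlam (min_le_right _ _))
        (by rw [Real.dist_eq]; exact hy)
    set φ : ℝ → ℝ := fun y => G (lam, y) - y with hφdef
    have hφdiff : ∀ y : ℝ, HasDerivAt φ (D1 (lam, y) - 1) y := by
      intro y
      have hGd : HasDerivAt (fun y => G (lam, y)) (D1 (lam, y)) y :=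
        ((hG.comp ((contDiff_const (c := lam)).prodMk contDiff_id)).differentiable
          (by norm_num) y).hasDerivAt
      exact hGd.sub (hasDerivAt_id y)
    have hanti : StrictAntiOn φ (Set.Ioo (x₀-δ) (x₀+δ)) := by
      apply strictAntiOn_of_deriv_neg (convex_Ioo _ _)
      · exact Continuous.continuousOn
          (Differentiable.continuous (fun y => (hφdiff y).differentiableAt))
      · intro y hy
        rw [interior_Ioo] at hy
        rw [(hφdiff y).deriv]
        have hyd : |y - x₀| < δ := abs_lt.mpr ⟨by linarith [hy.1], by linarith [hy.2]⟩
        linarith [hball y hyd]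
    have hx'mem : x' ∈ Set.Ioo (x₀-δ) (x₀+δ) := by
      rcases abs_lt.mp hx' with ⟨hl, hr⟩; exact ⟨by linarith, by linarith⟩
    have hx₀mem : x₀ ∈ Set.Ioo (x₀-δ) (x₀+δ) := ⟨by linarith, by linarith⟩
    have hφ0 : φ x₀ = 0 := by
      simp only [hφdef]
      rw [h1 lam (lt_of_lt_of_le hlam (min_le_left _ _))]; ring
    intro hcontra
    have hφx' : φ x' = 0 := by simp only [hφdef]; rw [hcontra]; ring
    exact hne (hanti.injOn hx'mem hx₀mem (by rw [hφx', hφ0]))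
  -- eventual smallness conditions
  have hpcont : ContinuousAt p x₀ := hpc.continuousAt
  have hev2 : ∀ᶠ x in nhds x₀, |p x - lam₀| < min ε δ := by
    have hb : Metric.ball lam₀ (min ε δ) ∈ nhds lam₀ := Metric.ball_mem_nhds _ (lt_min hε hδpos)
    have ht := hpcont.tendsto
    rw [hp0] at ht
    filter_upwards [ht hb] with x hx
    simpa [Metric.mem_ball, Real.dist_eq] using hx
  have hev3 : ∀ᶠ x in nhds x₀, |x - x₀| < δ := eventually_abs_sub_lt x₀ hδpos
  obtain ⟨u, hu_mem, hu⟩ : ∃ u ∈ nhds x₀, ContDiffOn ℝ 1 p u := by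
    have h := (contDiffWithinAt_iff_contDiffOn_nhds (𝕜 := ℝ) (f := p) (s := Set.univ) (x := x₀) (n := 1) (by norm_num)).mp hpc.contDiffWithinAt
    simpa [nhdsWithin_univ] using h
  have hall : u ∩ {x : ℝ | F (p x, x) = 0 ∧ |p x - lam₀| < min ε δ ∧ |x - x₀| < δ}
      ∈ nhds x₀ := by
    apply Filter.inter_mem hu_mem
    exact (hevF.and (hev2.and hev3))
  obtain ⟨A, B, hAB, hsub⟩ := mem_nhds_iff_exists_Ioo_subset.mp hall
  refine ⟨A, B, hAB.1, hAB.2, p, hu.mono (fun x hx => (hsub hx).1), hp0, ?_⟩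
  intro x hx
  obtain ⟨hxu, hxF, hxlam, hxd⟩ := hsub hx
  have hε' : |p x - lam₀| < ε := lt_of_lt_of_le hxlam (min_le_left _ _)
  constructor
  · have hmul := hFmul (p x) x
    rw [hxF, zero_mul] at hmul
    have hfix : G (p x, x₀) = x₀ := h1 _ hε'
    have hgx₀ : g (p x, x₀) = x₀ := by
      show G (p x, G (p x, x₀)) = x₀
      rw [hfix, hfix]
    rw [hgx₀] at hmul
    have : g (p x, x) = x := by linarith
    exact this
  · intro hne
    exact hnofix (p x) x hxlam hxd hne
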